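/- Let A be a two-sided skew brace and let X be a normal subgroup of the multiplicative group A_⊙. Then X*A, the subgroup of A_⊕ generated by all elements x*a with x ∈ X and a ∈ A, is an ideal of A. -/

import Mathlib

/-- A subset `I` of a skew brace `A` is an ideal if it is (the carrier of) a normal subgroup
of both the additive group and the multiplicative group of `A`, and `λ_a(I) = I` for all
`a ∈ A`, where `λ_a x = -a + a * x`. -/
def IsIdeal (A : Type*) [AddGroup A] [Group A] (I : Set A) : Prop :=
  (∃ N : AddSubgroup A, N.Normal ∧ (N : Set A) = I) ∧
  (∃ H : Subgroup A, H.Normal ∧ (H : Set A) = I) ∧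
  (∀ a : A, (fun x => -a + a * x) '' I = I)

/-- The star operation of a skew brace: `a * b = ⊖a ⊕ (a ⊙ b) ⊖ b`. -/
def sbStar (A : Type*) [AddGroup A] [Group A] (a b : A) : A := -a + a * b + -b

section SkewBraceAux

variable {A : Type*} [AddGroup A] [Group A]

lemma sb_mul_zero (hl : ∀ a b c : A, a * (b + c) = a * b + -a + a * c) (a : A) :
    a * (0 : A) = a := by
  have h := hl a 0 0
  rw [add_zero, add_assoc] at h
  have h2 := left_eq_add.mp h
  exact (neg_add_eq_zero.mp h2).symm

lemma sb_one_eq_zero (hl : ∀ a b c : A, a * (b + c) = a * b + -a + a * c) :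
    (1 : A) = 0 := by
  have h := sb_mul_zero hl (1 : A)
  rw [one_mul] at h
  exact h.symm

lemma sb_zero_mul (hr : ∀ a b c : A, (a + b) * c = a * c + -c + b * c) (c : A) :
    (0 : A) * c = c := by
  have h := hr 0 0 c
  rw [add_zero, add_assoc] at h
  have h2 := left_eq_add.mp h
  exact (neg_add_eq_zero.mp h2).symm

lemma sb_mul_neg (hl : ∀ a b c : A, a * (b + c) = a * b + -a + a * c) (a b : A) :
    a * (-b) = a + -(a * b) + a := by
  have h := hl a b (-b)
  rw [add_neg_cancel, sb_mul_zero hl] at h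
  calc a * -b = -(a * b + -a) + (a * b + -a + a * -b) := by rw [neg_add_cancel_left]
    _ = -(a * b + -a) + a := by rw [← h]
    _ = a + -(a * b) + a := by rw [neg_add_rev, neg_neg]

lemma sb_neg_mul (hr : ∀ a b c : A, (a + b) * c = a * c + -c + b * c) (a b : A) :
    (-a) * b = b + -(a * b) + b := by
  have h := hr a (-a) b
  rw [add_neg_cancel, sb_zero_mul hr] at h
  calc (-a) * b = -(a * b + -b) + (a * b + -b + (-a) * b) := by rw [neg_add_cancel_left]
    _ = -(a * b + -b) + b := by rw [← h]
    _ = b + -(a * b) + b := by rw [neg_add_rev, neg_neg]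

lemma sb_star_add_right (hl : ∀ a b c : A, a * (b + c) = a * b + -a + a * c) (x b c : A) :
    sbStar A x (b + c) = sbStar A x b + b + sbStar A x c + -b := by
  simp only [sbStar, hl, neg_add_rev]
  simp [add_assoc]

lemma sb_star_add_left (hr : ∀ a b c : A, (a + b) * c = a * c + -c + b * c) (a b c : A) :
    sbStar A (a + b) c = -b + sbStar A a c + b + sbStar A b c := by
  simp only [sbStar, hr, neg_add_rev]
  simp [add_assoc]

lemma sb_star_zero_left (hr : ∀ a b c : A, (a + b) * c = a * c + -c + b * c) (c : A) :
    sbStar A 0 c = 0 := by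
  simp [sbStar, sb_zero_mul hr]

lemma sb_star_zero_right (hl : ∀ a b c : A, a * (b + c) = a * b + -a + a * c) (a : A) :
    sbStar A a 0 = 0 := by
  simp [sbStar, sb_mul_zero hl]

lemma sb_star_neg_left (hr : ∀ a b c : A, (a + b) * c = a * c + -c + b * c) (a c : A) :
    sbStar A (-a) c = a + -(sbStar A a c) + -a := by
  have h := sb_star_add_left hr a (-a) c
  rw [add_neg_cancel, sb_star_zero_left hr, neg_neg] at h
  have h2 : sbStar A (-a) c = -(a + sbStar A a c + -a) :=
    (neg_eq_of_add_eq_zero_right h.symm).symm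
  rw [h2]
  simp [add_assoc]

lemma sb_star_mul_left (hl : ∀ a b c : A, a * (b + c) = a * b + -a + a * c) (a b c : A) :
    sbStar A (a * b) c = sbStar A a (sbStar A b c) + sbStar A b c + sbStar A a c := by
  simp only [sbStar]
  rw [hl, hl, sb_mul_neg hl, sb_mul_neg hl, mul_assoc]
  simp [add_assoc]

lemma sb_lam_star (hl : ∀ a b c : A, a * (b + c) = a * b + -a + a * c) (g x a : A) :
    -g + g * sbStar A x a =
      -g + (-(sbStar A (g * x * g⁻¹) g) + sbStar A (g * x * g⁻¹) (g * a)) + g := by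
  simp only [sbStar]
  rw [hl, hl, sb_mul_neg hl, sb_mul_neg hl]
  simp [mul_assoc, add_assoc]

lemma sb_star_star (hl : ∀ a b c : A, a * (b + c) = a * b + -a + a * c)
    (hr : ∀ a b c : A, (a + b) * c = a * c + -c + b * c) (x a c : A) :
    sbStar A (sbStar A x a) c =
      ((a + -(x * a) + x) + -(sbStar A x c) + -(a + -(x * a) + x))
        + (a + sbStar A x (sbStar A a c) + -a)
        + ((a + sbStar A a c) + sbStar A x c + -(a + sbStar A a c)) := by
  have h0 : sbStar A (sbStar A x a) c = sbStar A ((-x + x * a) + -a) c := rfl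
  rw [h0, sb_star_add_left hr, sb_star_add_left hr, sb_star_neg_left hr,
    sb_star_neg_left hr, sb_star_mul_left hl]
  simp [add_assoc, neg_add_rev]

end SkewBraceAux

/-- If `A` is a two-sided skew brace and `X` is a normal subgroup of the multiplicative
group of `A`, then `X * A` (the additive subgroup generated by all `x * a`, `x ∈ X`,
`a ∈ A`) is an ideal of `A`. -/
theorem two_sided_skew_brace_normal_star_ideal
    (A : Type*) [AddGroup A] [Group A]
    (hl : ∀ a b c : A, a * (b + c) = a * b + -a + a * c)
    (hr : ∀ a b c : A, (a + b) * c = a * c + -c + b * c)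
    (X : Subgroup A) (hX : X.Normal) :
    IsIdeal A (AddSubgroup.closure {z : A | ∃ x ∈ X, ∃ a : A, z = sbStar A x a} : Set A) := by
  set S : Set A := {z : A | ∃ x ∈ X, ∃ a : A, z = sbStar A x a} with hSdef
  set I : AddSubgroup A := AddSubgroup.closure S with hIdef
  have hgen : ∀ x ∈ X, ∀ a : A, sbStar A x a ∈ I := fun x hx a =>
    AddSubgroup.subset_closure ⟨x, hx, a, rfl⟩
  -- additive conjugation closure
  have conj_mem : ∀ (g : A) (s : A), s ∈ I → g + s + -g ∈ I := by
    intro g s hs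
    induction hs using AddSubgroup.closure_induction with
    | mem z hz =>
      obtain ⟨x, hx, c, rfl⟩ := hz
      have key : g + sbStar A x c + -g = -(sbStar A x g) + sbStar A x (g + c) := by
        rw [sb_star_add_right hl]
        simp [add_assoc]
      rw [key]
      exact add_mem (neg_mem (hgen x hx g)) (hgen x hx (g + c))
    | zero =>
      simpa using I.zero_mem
    | add s t _ _ ps pt =>
      have e : g + (s + t) + -g = (g + s + -g) + (g + t + -g) := by
        simp [add_assoc]
      rw [e]; exact add_mem ps pt
    | neg s _ ps =>
      have e : g + -s + -g = -(g + s + -g) := by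
        simp [add_assoc, neg_add_rev]
      rw [e]; exact neg_mem ps
  have conj_mem' : ∀ (g : A) (s : A), s ∈ I → -g + s + g ∈ I := by
    intro g s hs
    simpa using conj_mem (-g) s hs
  -- λ-stability
  have lam_mem : ∀ (g : A) (s : A), s ∈ I → -g + g * s ∈ I := by
    intro g s hs
    induction hs using AddSubgroup.closure_induction with
    | mem z hz =>
      obtain ⟨x, hx, a, rfl⟩ := hz
      rw [sb_lam_star hl]
      exact conj_mem' g _ (add_mem (neg_mem (hgen _ (hX.conj_mem x hx g) g))
        (hgen _ (hX.conj_mem x hx g) (g * a)))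
    | zero =>
      simpa [sb_mul_zero hl] using I.zero_mem
    | add s t _ _ ps pt =>
      have e : -g + g * (s + t) = (-g + g * s) + (-g + g * t) := by
        rw [hl]; simp [add_assoc]
      rw [e]; exact add_mem ps pt
    | neg s _ ps =>
      have e : -g + g * (-s) = -(-g + g * s) := by
        rw [sb_mul_neg hl]; simp [add_assoc, neg_add_rev]
      rw [e]; exact neg_mem ps
  -- star closure : I * A ⊆ I
  have star_mem : ∀ (s : A), s ∈ I → ∀ c : A, sbStar A s c ∈ I := by
    intro s hs
    induction hs using AddSubgroup.closure_induction with
    | mem z hz =>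
      obtain ⟨x, hx, a, rfl⟩ := hz
      intro c
      rw [sb_star_star hl hr]
      exact add_mem (add_mem (conj_mem _ _ (neg_mem (hgen x hx c)))
        (conj_mem _ _ (hgen x hx (sbStar A a c)))) (conj_mem _ _ (hgen x hx c))
    | zero =>
      intro c
      rw [sb_star_zero_left hr]; exact I.zero_mem
    | add s t _ _ ps pt =>
      intro c
      rw [sb_star_add_left hr]
      exact add_mem (conj_mem' t _ (ps c)) (pt c)
    | neg s _ ps =>
      intro c
      rw [sb_star_neg_left hr]
      exact conj_mem _ _ (neg_mem (ps c))
  -- the multiplicative subgroup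
  refine ⟨⟨I, ⟨fun n hn g => conj_mem g n hn⟩, rfl⟩, ?_, ?_⟩
  · refine ⟨{ carrier := (I : Set A)
              mul_mem' := ?_
              one_mem' := ?_
              inv_mem' := ?_ }, ⟨?_⟩, rfl⟩
    · intro s t hs ht
      have h := add_mem hs (lam_mem s t ht)
      simpa using h
    · show (1 : A) ∈ (I : Set A)
      rw [sb_one_eq_zero hl]
      exact I.zero_mem
    · intro s hs
      have h := neg_mem (lam_mem s⁻¹ s hs)
      simpa [inv_mul_cancel, sb_one_eq_zero hl] using h
    · intro n hn g
      have key : g * n * g⁻¹ =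
          -g⁻¹ + ((-g + g * n) + sbStar A (-g + g * n) g⁻¹) + g⁻¹ := by
        simp only [sbStar]
        rw [hr, sb_neg_mul hr, mul_inv_cancel, sb_one_eq_zero hl]
        simp [add_assoc]
      show g * n * g⁻¹ ∈ (I : Set A)
      rw [key]
      exact conj_mem' g⁻¹ _ (add_mem (lam_mem g n hn) (star_mem _ (lam_mem g n hn) g⁻¹))
  · intro a
    apply Set.Subset.antisymm
    · rintro _ ⟨s, hs, rfl⟩
      exact lam_mem a s hs
    · intro s hs
      refine ⟨-a⁻¹ + a⁻¹ * s, lam_mem a⁻¹ s hs, ?_⟩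
      show -a + a * (-a⁻¹ + a⁻¹ * s) = s
      rw [hl, sb_mul_neg hl, mul_inv_cancel, sb_one_eq_zero hl, mul_inv_cancel_left]
      simp [add_assoc]
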